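/- Let X be a first countable, non-separable, CCC space. Then there is a closed subspace Y of X that is CCC, has density exactly ω₁, and contains no countable dense subset; moreover Y has a regular closed (in Y) subspace Z that is nowhere separable, CCC, and has density ω₁. -/

import Mathlib

open Set Topology TopologicalSpace

/-- The countable chain condition. -/
def CCC (Y : Type*) [TopologicalSpace Y] : Prop :=
  ∀ 𝒰 : Set (Set Y), (∀ U ∈ 𝒰, IsOpen U ∧ U.Nonempty) → 𝒰.PairwiseDisjoint id →
    𝒰.Countable

/-- `Y` has density exactly ω₁: a dense set of size at most ℵ₁ exists, but no
countable dense set. -/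
def DensityAleph1 (Y : Type*) [TopologicalSpace Y] : Prop :=
  (∃ D : Set Y, Dense D ∧ Cardinal.mk ↥D ≤ Cardinal.aleph 1) ∧
  ∀ D : Set Y, Dense D → ¬ D.Countable

namespace Omega1Aux

open Cardinal Ordinal Filter

attribute [local instance] Classical.propDecidable

universe u
variable {X : Type u} [TopologicalSpace X] [FirstCountableTopology X]

/-- A countable family of open neighborhoods of `x` forming a neighborhood basis. -/
noncomputable def nb (x : X) (n : ℕ) : Set X :=
  interior ((Filter.exists_antitone_basis (𝓝 x)).choose n)

lemma nb_isOpen (x : X) (n : ℕ) : IsOpen (nb x n) := isOpen_interior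

lemma mem_nb (x : X) (n : ℕ) : x ∈ nb x n := by
  have h := (Filter.exists_antitone_basis (𝓝 x)).choose_spec
  exact mem_interior_iff_mem_nhds.2 (h.toHasBasis.mem_of_mem trivial)

lemma nb_subset {x : X} {O : Set X} (hO : IsOpen O) (hx : x ∈ O) : ∃ n, nb x n ⊆ O := by
  have h := (Filter.exists_antitone_basis (𝓝 x)).choose_spec
  obtain ⟨n, -, hsub⟩ := h.toHasBasis.mem_iff.1 (hO.mem_nhds hx)
  exact ⟨n, interior_subset.trans hsub⟩

/-- A chosen point of `nb x n ∩ nb y m` when the intersection is nonempty. -/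
noncomputable def pk (x : X) (n : ℕ) (y : X) (m : ℕ) : X :=
  if h : (nb x n ∩ nb y m).Nonempty then h.choose else x

lemma pk_mem {x : X} {n : ℕ} {y : X} {m : ℕ} (h : (nb x n ∩ nb y m).Nonempty) :
    pk x n y m ∈ nb x n ∩ nb y m := by
  rw [pk, dif_pos h]; exact h.choose_spec

/-- One step of the fullness closure. -/
noncomputable def stepF (A : Set X) : Set X :=
  A ∪ ⋃ (x ∈ A) (y ∈ A) (n : ℕ) (m : ℕ), {pk x n y m}

lemma subset_stepF (A : Set X) : A ⊆ stepF A := subset_union_left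

lemma stepF_countable {A : Set X} (hA : A.Countable) : (stepF A).Countable := by
  refine hA.union ?_
  exact hA.biUnion fun x _ => hA.biUnion fun y _ =>
    countable_iUnion fun n => countable_iUnion fun m => countable_singleton _

lemma pk_mem_stepF {A : Set X} {x y : X} (hx : x ∈ A) (hy : y ∈ A) (n m : ℕ) :
    pk x n y m ∈ stepF A := by
  refine Or.inr ?_
  simp only [mem_iUnion]
  exact ⟨x, hx, y, hy, n, m, rfl⟩

/-- The full hull of a set. -/
noncomputable def hull (A : Set X) : Set X := ⋃ k, stepF^[k] A

lemma subset_hull (A : Set X) : A ⊆ hull A := subset_iUnion (fun k => stepF^[k] A) 0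

lemma iter_mono (A : Set X) : Monotone fun k => (stepF^[k] A) := by
  apply monotone_nat_of_le_succ
  intro k
  rw [Function.iterate_succ_apply']
  exact subset_stepF _

lemma hull_countable {A : Set X} (hA : A.Countable) : (hull A).Countable := by
  refine countable_iUnion fun k => ?_
  induction k with
  | zero => exact hA
  | succ k ih => rw [Function.iterate_succ_apply']; exact stepF_countable ih

/-- `A` is full: it meets every nonempty pairwise intersection of basis sets at its points. -/
def Full (A : Set X) : Prop :=
  ∀ x ∈ A, ∀ y ∈ A, ∀ n m : ℕ, (nb x n ∩ nb y m).Nonempty →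
    ∃ z ∈ A, z ∈ nb x n ∩ nb y m

lemma hull_full (A : Set X) : Full (hull A) := by
  intro x hx y hy n m hne
  obtain ⟨k, hk⟩ := mem_iUnion.1 hx
  obtain ⟨l, hl⟩ := mem_iUnion.1 hy
  have hxk : x ∈ stepF^[max k l] A := iter_mono A (le_max_left k l) hk
  have hyl : y ∈ stepF^[max k l] A := iter_mono A (le_max_right k l) hl
  refine ⟨pk x n y m, ?_, pk_mem hne⟩
  have : pk x n y m ∈ stepF^[max k l + 1] A := by
    rw [Function.iterate_succ_apply']
    exact pk_mem_stepF hxk hyl n m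
  exact mem_iUnion.2 ⟨max k l + 1, this⟩

/-- The index type: a well-order of type ω₁. -/
abbrev Idx (X : Type u) : Type u := (Cardinal.aleph.{u} 1).ord.ToType

instance : Nonempty (Idx X) := by
  rw [Ordinal.toType_nonempty_iff_ne_zero]
  exact Cardinal.ord_eq_zero.not.2 (Cardinal.aleph_pos 1).ne'

/-- A point outside the closure of `C`, when one exists. -/
noncomputable def pick [Nonempty X] (C : Set X) : X :=
  if h : ∃ x, x ∉ closure C then h.choose else Classical.arbitrary X

lemma pick_spec [Nonempty X] {C : Set X} (h : ∃ x, x ∉ closure C) : pick C ∉ closure C := by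
  rw [pick, dif_pos h]; exact h.choose_spec

/-- The transfinite chain of countable full sets. -/
noncomputable def chain [Nonempty X] : Idx X → Set X :=
  (IsWellFounded.wf (r := ((· < ·) : Idx X → Idx X → Prop))).fix fun i ih =>
    hull ((⋃ j : Iio i, ih j j.2) ∪ {pick (⋃ j : Iio i, ih j j.2)})

/-- The union of the chain below `i`. -/
noncomputable def cbase [Nonempty X] (i : Idx X) : Set X := ⋃ j : Iio i, chain j

lemma chain_eq [Nonempty X] (i : Idx X) :
    chain i = hull (cbase i ∪ {pick (cbase i)}) := by
  rw [chain, WellFounded.fix_eq]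
  rfl

lemma cbase_subset_chain [Nonempty X] (i : Idx X) : cbase i ⊆ chain i := by
  rw [chain_eq]
  exact subset_union_left.trans (subset_hull _)

lemma pick_mem_chain [Nonempty X] (i : Idx X) : pick (cbase i) ∈ chain i := by
  rw [chain_eq]
  exact subset_hull _ (Or.inr rfl)

lemma chain_subset_of_lt [Nonempty X] {j i : Idx X} (h : j < i) : chain j ⊆ cbase i :=
  subset_iUnion_of_subset (⟨j, h⟩ : Iio i) subset_rfl

lemma chain_mono [Nonempty X] {j i : Idx X} (h : j ≤ i) : chain j ⊆ chain i := by
  rcases eq_or_lt_of_le h with rfl | h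
  · exact subset_rfl
  · exact (chain_subset_of_lt h).trans (cbase_subset_chain i)

lemma countable_Iio (i : Idx X) : (Iio i).Countable := by
  rw [countable_iff_lt_aleph_one]
  exact Cardinal.mk_Iio_ord_toType i

lemma chain_countable [Nonempty X] (i : Idx X) : (chain i).Countable := by
  induction i using WellFoundedLT.induction with
  | ind i ih =>
    rw [chain_eq]
    refine hull_countable (Set.Countable.union ?_ (countable_singleton _))
    haveI : Countable (Iio i) := (countable_Iio i).to_subtype
    exact countable_iUnion fun j => ih j j.2

lemma cbase_countable [Nonempty X] (i : Idx X) : (cbase i).Countable := by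
  haveI : Countable (Iio i) := (countable_Iio i).to_subtype
  exact countable_iUnion fun j => chain_countable j.1

lemma chain_full [Nonempty X] (i : Idx X) : Full (chain i) := by
  rw [chain_eq]; exact hull_full _

lemma bounded_of_countable {s : Set (Idx X)} (hs : s.Countable) : ∃ i, ∀ j ∈ s, j < i := by
  haveI inst : IsWellOrder (Idx X) (· < ·) := isWellOrder_lt
  have h1 : #s < ((Ordinal.type ((· < ·) : Idx X → Idx X → Prop)).cof) := by
    have : Ordinal.type ((· < ·) : Idx X → Idx X → Prop) = (Cardinal.aleph.{u} 1).ord :=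
      Ordinal.type_toType _
    rw [this, Cardinal.isRegular_aleph_one.cof_eq]
    exact (countable_iff_lt_aleph_one s).1 hs
  rw [Ordinal.cof_type] at h1
  by_contra hc
  push_neg at hc
  exact absurd (Order.cof_le (fun i => hc i)) (not_le.2 h1)

end Omega1Aux

open scoped Cardinal
open Omega1Aux


lemma closure_subtype_eq {α : Type*} [TopologicalSpace α] {s : Set α} (t : Set ↥s) :
    closure t = Subtype.val ⁻¹' closure (Subtype.val '' t) :=
  Topology.IsEmbedding.subtypeVal.closure_eq_preimage_closure_image t

/-- The second half: from a CCC space with a dense set of size ≤ ℵ₁ but no countable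
dense set, extract a regular closed nowhere separable subspace. -/
theorem part2 {W : Type*} [TopologicalSpace W] (hccc : CCC W)
    (hd : ∃ D : Set W, Dense D ∧ #↥D ≤ Cardinal.aleph 1)
    (hnd : ∀ D : Set W, Dense D → ¬ D.Countable) :
    ∃ Z : Set W, IsClosed Z ∧ Z = closure (interior Z) ∧
      (∀ U : Set W, IsOpen U → (U ∩ Z).Nonempty → ¬ IsSeparable (U ∩ Z)) ∧
      CCC ↥Z ∧ DensityAleph1 ↥Z := by
  classical
  obtain ⟨D, hDdense, hDcard⟩ := hd
  -- maximal disjoint family of nonempty open separable sets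
  set S : Set (Set (Set W)) :=
    {𝒱 | (∀ V ∈ 𝒱, IsOpen V ∧ V.Nonempty ∧ IsSeparable V) ∧ 𝒱.PairwiseDisjoint id} with hS
  obtain ⟨M, hM⟩ : ∃ M, Maximal (· ∈ S) M := by
    apply zorn_subset
    intro c hcS hchain
    refine ⟨⋃₀ c, ⟨?_, ?_⟩, fun s hs => subset_sUnion_of_mem hs⟩
    · rintro V ⟨𝒱, h𝒱, hV⟩
      exact (hcS h𝒱).1 V hV
    · rintro V ⟨𝒱, h𝒱, hV⟩ V' ⟨𝒱', h𝒱', hV'⟩ hne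
      rcases hchain.total h𝒱 h𝒱' with h | h
      · exact (hcS h𝒱').2 (h hV) hV' hne
      · exact (hcS h𝒱).2 hV (h hV') hne
  have hMcnt : M.Countable := hccc M (fun V hV => ⟨(hM.1.1 V hV).1, (hM.1.1 V hV).2.1⟩) hM.1.2
  set W₀ : Set W := ⋃₀ M with hW₀
  have hW₀sep : IsSeparable W₀ := by
    rw [hW₀, sUnion_eq_iUnion]
    haveI : Countable M := hMcnt.to_subtype
    exact isSeparable_iUnion.2 fun V => (hM.1.1 V V.2).2.2
  set G : Set W := (closure W₀)ᶜ with hG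
  have hGopen : IsOpen G := isClosed_closure.isOpen_compl
  set Z : Set W := closure G with hZ
  -- G is nonempty
  have hGne : G.Nonempty := by
    by_contra h
    have hcl : closure W₀ = univ := by
      have := not_nonempty_iff_eq_empty.1 h
      rw [hG] at this
      simpa [compl_empty_iff] using this
    obtain ⟨c, hc, hsub⟩ := hW₀sep
    have : Dense c := by
      rw [dense_iff_closure_eq]
      apply eq_univ_of_univ_subset
      rw [← hcl]
      exact (closure_mono hsub).trans (by rw [closure_closure])
    exact hnd c this hc
  -- nowhere separable
  have hnowhere : ∀ U : Set W, IsOpen U → (U ∩ Z).Nonempty → ¬ IsSeparable (U ∩ Z) := by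
    intro U hU ⟨z, hzU, hzZ⟩ hsep
    have hUG : (U ∩ G).Nonempty := by
      rw [hZ, mem_closure_iff] at hzZ
      exact hzZ U hU hzU
    have hV'sep : IsSeparable (U ∩ G) :=
      hsep.mono (inter_subset_inter_right U subset_closure)
    have hdisj : ∀ V ∈ M, Disjoint (U ∩ G) V := by
      intro V hV
      refine disjoint_left.2 fun x hx hxV => ?_
      exact hx.2 (subset_closure (subset_sUnion_of_mem hV hxV))
    have hmem : insert (U ∩ G) M ∈ S := by
      constructor
      · rintro V (rfl | hV)
        · exact ⟨hU.inter hGopen, hUG, hV'sep⟩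
        · exact hM.1.1 V hV
      · apply hM.1.2.insert
        intro V hV _
        exact hdisj V hV
    have : U ∩ G ∈ M := hM.2 hmem (subset_insert _ _) (mem_insert _ _)
    obtain ⟨x, hxU, hxG⟩ := hUG
    exact hxG (subset_closure (subset_sUnion_of_mem this ⟨hxU, hxG⟩))
  have hGZ : G ⊆ Z := subset_closure
  -- regular closed
  have hreg : Z = closure (interior Z) := by
    apply Subset.antisymm
    · rw [hZ]
      exact closure_mono (interior_maximal hGZ hGopen)
    · exact (closure_mono interior_subset).trans (by rw [hZ, closure_closure])
  -- CCC of Z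
  have hZccc : CCC ↥Z := by
    intro 𝒰 h𝒰 h𝒰d
    have hOsel : ∀ U : Set ↥Z, ∃ O : Set W, U ∈ 𝒰 → IsOpen O ∧ Subtype.val ⁻¹' O = U := by
      intro U
      by_cases hU : U ∈ 𝒰
      · obtain ⟨O, hO, hOU⟩ := isOpen_induced_iff.1 (h𝒰 U hU).1
        exact ⟨O, fun _ => ⟨hO, hOU⟩⟩
      · exact ⟨∅, fun h => absurd h hU⟩
    choose O hO using hOsel
    set f : Set ↥Z → Set W := fun U => O U ∩ G with hf
    have hfopen : ∀ U ∈ 𝒰, IsOpen (f U) := fun U hU => ((hO U hU).1).inter hGopen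
    have hfne : ∀ U ∈ 𝒰, (f U).Nonempty := by
      intro U hU
      obtain ⟨z, hz⟩ := (h𝒰 U hU).2
      have hzO : (z : W) ∈ O U := by rw [← (hO U hU).2] at hz; exact hz
      have : (z : W) ∈ closure G := z.2
      rw [mem_closure_iff] at this
      exact this (O U) (hO U hU).1 hzO
    have hfdisj : ∀ U ∈ 𝒰, ∀ U' ∈ 𝒰, U ≠ U' → Disjoint (f U) (f U') := by
      intro U hU U' hU' hne
      refine disjoint_left.2 fun x hx hx' => ?_
      have hxZ : x ∈ Z := hGZ hx.2
      have h1 : (⟨x, hxZ⟩ : ↥Z) ∈ U := by rw [← (hO U hU).2]; exact hx.1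
      have h2 : (⟨x, hxZ⟩ : ↥Z) ∈ U' := by rw [← (hO U' hU').2]; exact hx'.1
      exact absurd rfl (((h𝒰d hU hU' hne).ne_of_mem h1 h2))
    have hinj : InjOn f 𝒰 := by
      intro U hU U' hU' heq
      by_contra hne
      obtain ⟨x, hx⟩ := hfne U hU
      exact absurd heq (fun h => (disjoint_left.1 (hfdisj U hU U' hU' hne) hx (h ▸ hx)))
    have himg : (f '' 𝒰).Countable := by
      apply hccc
      · rintro V ⟨U, hU, rfl⟩
        exact ⟨hfopen U hU, hfne U hU⟩
      · rintro V ⟨U, hU, rfl⟩ V' ⟨U', hU', rfl⟩ hne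
        have : U ≠ U' := fun h => hne (by rw [h])
        exact hfdisj U hU U' hU' this
    exact (mapsTo_image f 𝒰).countable_of_injOn hinj himg
  -- density of Z
  have hZdense : DensityAleph1 ↥Z := by
    constructor
    · refine ⟨Subtype.val ⁻¹' (D ∩ G), ?_, ?_⟩
      · -- dense in Z
        rw [dense_iff_closure_eq]
        apply eq_univ_of_forall
        intro z
        have himg : Subtype.val '' (Subtype.val ⁻¹' (D ∩ G) : Set ↥Z) = D ∩ G := by
          rw [Subtype.image_preimage_coe]
          exact inter_eq_right.2 ((inter_subset_right).trans hGZ)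
        rw [closure_subtype_eq (s := Z), himg]
        have hsub : G ⊆ closure (D ∩ G) := by
          have := hDdense.open_subset_closure_inter hGopen
          rwa [inter_comm] at this
        have : (z : W) ∈ closure (D ∩ G) :=
          (closure_minimal hsub isClosed_closure : Z ⊆ closure (D ∩ G)) z.2
        exact this
      · -- cardinality
        refine le_trans ?_ hDcard
        apply Cardinal.mk_le_of_injective
          (f := fun x : ↥(Subtype.val ⁻¹' (D ∩ G) : Set ↥Z) => (⟨x.1.1, x.2.1⟩ : ↥D))
        intro a b hab
        simp only [Subtype.mk.injEq] at hab
        exact Subtype.ext (Subtype.ext hab)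
    · -- no countable dense subset
      intro D₀ hD₀dense hD₀cnt
      have hZsep : IsSeparable Z := by
        refine ⟨Subtype.val '' D₀, hD₀cnt.image _, ?_⟩
        intro z hz
        have : (⟨z, hz⟩ : ↥Z) ∈ closure D₀ := hD₀dense _
        rw [closure_subtype_eq (s := Z)] at this
        exact this
      have : (univ ∩ Z).Nonempty := ⟨hGne.choose, trivial, hGZ hGne.choose_spec⟩
      exact hnowhere univ isOpen_univ this (by rwa [univ_inter])
  exact ⟨Z, isClosed_closure, hreg, hnowhere, hZccc, hZdense⟩

/-- Every first countable, non-separable, CCC space has a closed CCC subspace `Y`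
of density exactly ω₁ (so with no countable dense subset), and `Y` in turn has a
regular closed subspace `Z` that is nowhere separable, CCC, and of density ω₁. -/
theorem exists_closed_ccc_density_omega1 {X : Type*} [TopologicalSpace X]
    [FirstCountableTopology X] (hns : ¬ SeparableSpace X) (hccc : CCC X) :
    ∃ Y : Set X, IsClosed Y ∧ CCC ↥Y ∧ DensityAleph1 ↥Y ∧
      ∃ Z : Set ↥Y, IsClosed Z ∧ Z = closure (interior Z) ∧
        (∀ U : Set ↥Y, IsOpen U → (U ∩ Z).Nonempty → ¬ IsSeparable (U ∩ Z)) ∧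
        CCC ↥Z ∧ DensityAleph1 ↥Z := by
  classical
  haveI : Nonempty X := by
    by_contra h
    rw [not_nonempty_iff] at h
    exact hns ⟨⟨∅, countable_empty, fun x => (h.false x).elim⟩⟩
  have hns' : ∀ C : Set X, C.Countable → ∃ x, x ∉ closure C := by
    intro C hC
    by_contra h
    push_neg at h
    exact hns ⟨⟨C, hC, fun x => h x⟩⟩
  have hpick : ∀ i : Idx X, pick (cbase i) ∉ closure (cbase i) := fun i =>
    pick_spec (hns' _ (cbase_countable i))
  set D : Set X := ⋃ i : Idx X, chain i with hD
  set Y : Set X := closure D with hYdef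
  have hDY : D ⊆ Y := subset_closure
  -- every point of Y lies in the closure of some chain
  have Ycover : ∀ y ∈ Y, ∃ i : Idx X, y ∈ closure (chain i) := by
    intro y hy
    rw [hYdef, mem_closure_iff_seq_limit] at hy
    obtain ⟨u, hu, hlim⟩ := hy
    have hsel : ∀ n : ℕ, ∃ i : Idx X, u n ∈ chain i := fun n => mem_iUnion.1 (hu n)
    choose g hg using hsel
    obtain ⟨i, hi⟩ := bounded_of_countable (countable_range g)
    refine ⟨i, mem_closure_iff_seq_limit.2 ⟨u, fun n => ?_, hlim⟩⟩
    exact chain_mono (le_of_lt (hi (g n) (mem_range_self n))) (hg n)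
  -- CCC of Y
  have hYccc : CCC ↥Y := by
    intro 𝒰 h𝒰 h𝒰d
    have hOsel : ∀ U : Set ↥Y, ∃ O : Set X, U ∈ 𝒰 → IsOpen O ∧ Subtype.val ⁻¹' O = U := by
      intro U
      by_cases hU : U ∈ 𝒰
      · obtain ⟨O, hO, hOU⟩ := isOpen_induced_iff.1 (h𝒰 U hU).1
        exact ⟨O, fun _ => ⟨hO, hOU⟩⟩
      · exact ⟨∅, fun h => absurd h hU⟩
    choose O hO using hOsel
    have hsel : ∀ U : Set ↥Y, ∃ (a : X) (i : Idx X) (n : ℕ),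
        U ∈ 𝒰 → a ∈ chain i ∧ nb a n ⊆ O U := by
      intro U
      by_cases hU : U ∈ 𝒰
      · obtain ⟨z, hz⟩ := (h𝒰 U hU).2
        have hzO : (z : X) ∈ O U := by rw [← (hO U hU).2] at hz; exact hz
        have hzY : (z : X) ∈ closure D := z.2
        rw [mem_closure_iff] at hzY
        obtain ⟨a, haO, haD⟩ := hzY (O U) (hO U hU).1 hzO
        obtain ⟨i, hai⟩ := mem_iUnion.1 haD
        obtain ⟨n, hn⟩ := nb_subset (hO U hU).1 haO
        exact ⟨a, i, n, fun _ => ⟨hai, hn⟩⟩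
      · exact ⟨Classical.arbitrary X, Classical.arbitrary (Idx X), 0,
          fun h => absurd h hU⟩
    choose a idx nn hsel using hsel
    set f : Set ↥Y → Set X := fun U => nb (a U) (nn U) with hf
    have hfdisj : ∀ U ∈ 𝒰, ∀ U' ∈ 𝒰, U ≠ U' → Disjoint (f U) (f U') := by
      intro U hU U' hU' hne
      rw [Set.disjoint_left]
      intro x hx hx'
      -- use fullness
      set γ : Idx X := max (idx U) (idx U') with hγ
      have h1 : a U ∈ chain γ := chain_mono (le_max_left _ _) (hsel U hU).1
      have h2 : a U' ∈ chain γ := chain_mono (le_max_right _ _) (hsel U' hU').1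
      obtain ⟨w, hw, hw1, hw2⟩ := chain_full γ _ h1 _ h2 (nn U) (nn U') ⟨x, hx, hx'⟩
      have hwY : w ∈ Y := hDY (mem_iUnion.2 ⟨γ, hw⟩)
      have hwU : (⟨w, hwY⟩ : ↥Y) ∈ U := by
        rw [← (hO U hU).2]; exact (hsel U hU).2 hw1
      have hwU' : (⟨w, hwY⟩ : ↥Y) ∈ U' := by
        rw [← (hO U' hU').2]; exact (hsel U' hU').2 hw2
      exact absurd rfl ((h𝒰d hU hU' hne).ne_of_mem hwU hwU')
    have hinj : InjOn f 𝒰 := by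
      intro U hU U' hU' heq
      by_contra hne
      have : (f U).Nonempty := ⟨a U, mem_nb _ _⟩
      obtain ⟨x, hx⟩ := this
      exact disjoint_left.1 (hfdisj U hU U' hU' hne) hx (heq ▸ hx)
    have himg : (f '' 𝒰).Countable := by
      apply hccc
      · rintro V ⟨U, hU, rfl⟩
        exact ⟨nb_isOpen _ _, ⟨a U, mem_nb _ _⟩⟩
      · rintro V ⟨U, hU, rfl⟩ V' ⟨U', hU', rfl⟩ hne
        exact hfdisj U hU U' hU' (fun h => hne (by rw [h]))
    exact (mapsTo_image f 𝒰).countable_of_injOn hinj himg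
  -- density of Y
  have hYd1 : ∃ E : Set ↥Y, Dense E ∧ #↥E ≤ Cardinal.aleph 1 := by
    refine ⟨Subtype.val ⁻¹' D, ?_, ?_⟩
    · rw [dense_iff_closure_eq]
      apply eq_univ_of_forall
      intro y
      rw [closure_subtype_eq (s := Y)]
      have himg : Subtype.val '' (Subtype.val ⁻¹' D : Set ↥Y) = D := by
        rw [Subtype.image_preimage_coe]
        exact inter_eq_right.2 hDY
      rw [himg]
      exact y.2
    · have hDcard : #↥D ≤ Cardinal.aleph 1 := by
        rw [hD]
        refine le_trans (Cardinal.mk_iUnion_le _) ?_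
        have h1 : #(Idx X) = Cardinal.aleph 1 := Cardinal.mk_ord_toType _
        have h2 : ⨆ i : Idx X, #↥(chain i) ≤ ℵ₀ :=
          ciSup_le' fun i => Cardinal.mk_le_aleph0_iff.2 (chain_countable i).to_subtype
        calc #(Idx X) * ⨆ i : Idx X, #↥(chain i) ≤ Cardinal.aleph 1 * ℵ₀ := by
              exact mul_le_mul' (le_of_eq h1) h2
          _ = Cardinal.aleph 1 := by
              rw [Cardinal.mul_eq_left (Cardinal.aleph0_le_aleph 1)
                (le_of_lt Cardinal.aleph0_lt_aleph_one) Cardinal.aleph0_ne_zero]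
      refine le_trans ?_ hDcard
      apply Cardinal.mk_le_of_injective
        (f := fun x : ↥(Subtype.val ⁻¹' D : Set ↥Y) => (⟨x.1.1, x.2⟩ : ↥D))
      intro x y hxy
      simp only [Subtype.mk.injEq] at hxy
      exact Subtype.ext (Subtype.ext hxy)
  have hYnd : ∀ E : Set ↥Y, Dense E → ¬ E.Countable := by
    intro E hE hEcnt
    set C : Set X := Subtype.val '' E with hC
    have hCcnt : C.Countable := hEcnt.image _
    have hCY : C ⊆ Y := by rintro x ⟨e, _, rfl⟩; exact e.2
    have hsel : ∀ x : X, ∃ i : Idx X, x ∈ Y → x ∈ closure (chain i) := by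
      intro x
      by_cases hx : x ∈ Y
      · obtain ⟨i, hi⟩ := Ycover x hx
        exact ⟨i, fun _ => hi⟩
      · exact ⟨Classical.arbitrary _, fun h => absurd h hx⟩
    choose g hg using hsel
    obtain ⟨i₀, hi₀⟩ := bounded_of_countable (hCcnt.image g)
    have hCsub : C ⊆ closure (cbase i₀) := by
      intro c hc
      have h1 : c ∈ closure (chain (g c)) := hg c (hCY hc)
      have h2 : g c < i₀ := hi₀ _ (mem_image_of_mem g hc)
      exact closure_mono (chain_subset_of_lt h2) h1
    have hYC : Y ⊆ closure C := by
      intro y hy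
      have : (⟨y, hy⟩ : ↥Y) ∈ closure E := hE _
      rw [closure_subtype_eq (s := Y)] at this
      exact this
    have hp : pick (cbase i₀) ∈ Y := hDY (mem_iUnion.2 ⟨i₀, pick_mem_chain i₀⟩)
    have : pick (cbase i₀) ∈ closure (cbase i₀) := by
      have h1 : pick (cbase i₀) ∈ closure C := hYC hp
      exact (closure_minimal hCsub isClosed_closure) h1
    exact hpick i₀ this
  have hYdens : DensityAleph1 ↥Y := ⟨hYd1, hYnd⟩
  refine ⟨Y, isClosed_closure, hYccc, hYdens, ?_⟩
  exact part2 hYccc hYd1 hYnd
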